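/- arXiv:2501.10942 — 3 statements merged into one kernel-verified Lean document; each statement's English description precedes it below -/
import Mathlib

section
/- Suppose u_i = z_{g(i)} + e_i for i = 1,…,p with p ≥ 3, where g : [p] → [K] is surjective onto clusters each of size at least 2 (and p ≥ 3 ensures an index l ∉ {i,j} exists in some cluster), the z_k's have mean zero with Cov(z_k, z_{k'}) forming a positive definite K×K matrix, the e_i's are mean zero, pairwise uncorrelated, and uncorrelated with every z_k. If g(i) ≠ g(j) and there exists l ∉ {i,j} with g(l) = g(i), then Cov(u_i - u_j, u_l) = Cov(z_{g(i)}, z_{g(i)}) - Cov(z_{g(j)}, z_{g(i)}), and in particular max_{l ∉ {i,j}} |Cov(u_i - u_j, u_l)| > 0. -/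
open MeasureTheory

/-- Covariance of two real random variables: `Cov(X,Y) = E[XY] - E[X]E[Y]`. -/
noncomputable def cov {Ω : Type*} [MeasurableSpace Ω] (μ : Measure Ω) (X Y : Ω → ℝ) : ℝ :=
  (∫ ω, X ω * Y ω ∂μ) - (∫ ω, X ω ∂μ) * (∫ ω, Y ω ∂μ)

section aux
variable {Ω : Type*} [MeasurableSpace Ω] {μ : Measure Ω} [IsFiniteMeasure μ]

lemma aux_int_mul {X Y : Ω → ℝ} (hX : MemLp X 2 μ) (hY : MemLp Y 2 μ) :
    Integrable (fun ω => X ω * Y ω) μ := by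
  have h : MemLp (Y • X) 1 μ := hX.smul hY
  rw [memLp_one_iff_integrable] at h
  exact (by simpa [Pi.smul_apply, smul_eq_mul, mul_comm] using h : Integrable (X * Y) μ)

lemma aux_cov_comm (X Y : Ω → ℝ) : cov μ X Y = cov μ Y X := by
  unfold cov; simp_rw [mul_comm (X _) (Y _)]; ring

lemma aux_cov_expand {X1 X2 X3 X4 Y1 Y2 : Ω → ℝ}
    (h1 : MemLp X1 2 μ) (h2 : MemLp X2 2 μ) (h3 : MemLp X3 2 μ) (h4 : MemLp X4 2 μ)
    (h5 : MemLp Y1 2 μ) (h6 : MemLp Y2 2 μ) :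
    cov μ (fun ω => (X1 ω + X2 ω) - (X3 ω + X4 ω)) (fun ω => Y1 ω + Y2 ω)
      = cov μ X1 Y1 + cov μ X1 Y2 + cov μ X2 Y1 + cov μ X2 Y2
        - cov μ X3 Y1 - cov μ X3 Y2 - cov μ X4 Y1 - cov μ X4 Y2 := by
  unfold cov
  have i15 := aux_int_mul h1 h5
  have i16 := aux_int_mul h1 h6
  have i25 := aux_int_mul h2 h5
  have i26 := aux_int_mul h2 h6
  have i35 := aux_int_mul h3 h5
  have i36 := aux_int_mul h3 h6
  have i45 := aux_int_mul h4 h5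
  have i46 := aux_int_mul h4 h6
  have e1 : (∫ ω, ((X1 ω + X2 ω) - (X3 ω + X4 ω)) * (Y1 ω + Y2 ω) ∂μ)
      = (∫ ω, X1 ω * Y1 ω ∂μ) + (∫ ω, X1 ω * Y2 ω ∂μ) + (∫ ω, X2 ω * Y1 ω ∂μ)
        + (∫ ω, X2 ω * Y2 ω ∂μ) - ((∫ ω, X3 ω * Y1 ω ∂μ) + (∫ ω, X3 ω * Y2 ω ∂μ)
        + (∫ ω, X4 ω * Y1 ω ∂μ) + (∫ ω, X4 ω * Y2 ω ∂μ)) := by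
    have hp : ∀ ω, ((X1 ω + X2 ω) - (X3 ω + X4 ω)) * (Y1 ω + Y2 ω)
        = (X1 ω * Y1 ω + X1 ω * Y2 ω + X2 ω * Y1 ω + X2 ω * Y2 ω)
          - (X3 ω * Y1 ω + X3 ω * Y2 ω + X4 ω * Y1 ω + X4 ω * Y2 ω) := fun ω => by ring
    simp_rw [hp]
    have A1 : Integrable (fun ω => X1 ω * Y1 ω + X1 ω * Y2 ω + X2 ω * Y1 ω + X2 ω * Y2 ω) μ :=
      ((i15.add i16).add i25).add i26
    have A2 : Integrable (fun ω => X3 ω * Y1 ω + X3 ω * Y2 ω + X4 ω * Y1 ω + X4 ω * Y2 ω) μ :=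
      ((i35.add i36).add i45).add i46
    have B1 : Integrable (fun ω => X1 ω * Y1 ω + X1 ω * Y2 ω + X2 ω * Y1 ω) μ :=
      (i15.add i16).add i25
    have B2 : Integrable (fun ω => X3 ω * Y1 ω + X3 ω * Y2 ω + X4 ω * Y1 ω) μ :=
      (i35.add i36).add i45
    have C1 : Integrable (fun ω => X1 ω * Y1 ω + X1 ω * Y2 ω) μ := i15.add i16
    have C2 : Integrable (fun ω => X3 ω * Y1 ω + X3 ω * Y2 ω) μ := i35.add i36
    rw [integral_sub A1 A2, integral_add B1 i26, integral_add C1 i25, integral_add i15 i16,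
      integral_add B2 i46, integral_add C2 i45, integral_add i35 i36]
  have j1 := h1.integrable one_le_two
  have j2 := h2.integrable one_le_two
  have j3 := h3.integrable one_le_two
  have j4 := h4.integrable one_le_two
  have j5 := h5.integrable one_le_two
  have j6 := h6.integrable one_le_two
  have e2 : (∫ ω, ((X1 ω + X2 ω) - (X3 ω + X4 ω)) ∂μ)
      = (∫ ω, X1 ω ∂μ) + (∫ ω, X2 ω ∂μ) - ((∫ ω, X3 ω ∂μ) + (∫ ω, X4 ω ∂μ)) := by
    have D1 : Integrable (fun ω => X1 ω + X2 ω) μ := j1.add j2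
    have D2 : Integrable (fun ω => X3 ω + X4 ω) μ := j3.add j4
    rw [integral_sub D1 D2, integral_add j1 j2, integral_add j3 j4]
  have e3 : (∫ ω, (Y1 ω + Y2 ω) ∂μ) = (∫ ω, Y1 ω ∂μ) + (∫ ω, Y2 ω ∂μ) :=
    integral_add j5 j6
  rw [e1, e2, e3]; ring

end aux

/-- In the model `u_i = z_{g(i)} + e_i` with `p ≥ 3`, `g` surjective with each
cluster of size at least 2, mean-zero `z`'s with positive definite covariance matrix, and
mean-zero pairwise uncorrelated `e`'s uncorrelated with every `z_k`: if `g(i) ≠ g(j)` and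
there is `l ∉ {i,j}` with `g(l) = g(i)`, then
`Cov(u_i - u_j, u_l) = Cov(z_{g(i)}, z_{g(i)}) - Cov(z_{g(j)}, z_{g(i)})`, and
`max_{l' ∉ {i,j}} |Cov(u_i - u_j, u_{l'})| > 0`. -/
theorem cov_diff_of_different_clusters
    {Ω : Type*} [MeasurableSpace Ω] (μ : Measure Ω) [IsProbabilityMeasure μ]
    {p K : ℕ} (hp : 3 ≤ p) (g : Fin p → Fin K)
    (hgsurj : Function.Surjective g)
    (hgsize : ∀ k, 2 ≤ (Finset.univ.filter (fun i => g i = k)).card)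
    (z : Fin K → Ω → ℝ) (e : Fin p → Ω → ℝ)
    (hz2 : ∀ k, MemLp (z k) 2 μ) (he2 : ∀ i, MemLp (e i) 2 μ)
    (hzmean : ∀ k, (∫ ω, z k ω ∂μ) = 0) (hemean : ∀ i, (∫ ω, e i ω ∂μ) = 0)
    (hSz : (Matrix.of (fun k k' : Fin K => cov μ (z k) (z k'))).PosDef)
    (hee : ∀ i j, i ≠ j → cov μ (e i) (e j) = 0)
    (hez : ∀ i k, cov μ (e i) (z k) = 0)
    (u : Fin p → Ω → ℝ) (hu : ∀ i ω, u i ω = z (g i) ω + e i ω)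
    (i j l : Fin p) (hij : g i ≠ g j) (hl₁ : l ≠ i) (hl₂ : l ≠ j) (hl₃ : g l = g i) :
    cov μ (fun ω => u i ω - u j ω) (u l) =
      cov μ (z (g i)) (z (g i)) - cov μ (z (g j)) (z (g i)) ∧
    0 < (Finset.univ.filter (fun l' : Fin p => l' ≠ i ∧ l' ≠ j)).sup'
      (by
        rw [Finset.filter_nonempty_iff]
        by_contra hcon
        push_neg at hcon
        have hsub : (Finset.univ : Finset (Fin p)) ⊆ {i, j} := by
          intro x _
          rcases eq_or_ne x i with h | h
          · simp [h]
          · have := hcon x (Finset.mem_univ x) h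
            simp [this]
        have hcard := Finset.card_le_card hsub
        have h2 : ({i, j} : Finset (Fin p)).card ≤ 2 :=
          (Finset.card_insert_le _ _).trans (by simp)
        have : p ≤ 2 := by
          calc p = (Finset.univ : Finset (Fin p)).card := by simp
          _ ≤ ({i, j} : Finset (Fin p)).card := hcard
          _ ≤ 2 := h2
        omega)
      (fun l' => |cov μ (fun ω => u i ω - u j ω) (u l')|) := by
  have key : ∀ l' : Fin p, l' ≠ i → l' ≠ j →
      cov μ (fun ω => u i ω - u j ω) (u l')
        = cov μ (z (g i)) (z (g l')) - cov μ (z (g j)) (z (g l')) := by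
    intro l' h1 h2
    have hfun : (fun ω => u i ω - u j ω)
        = fun ω => (z (g i) ω + e i ω) - (z (g j) ω + e j ω) := by
      funext ω; rw [hu, hu]
    have hfun2 : u l' = fun ω => z (g l') ω + e l' ω := by funext ω; rw [hu]
    rw [hfun, hfun2,
      aux_cov_expand (hz2 _) (he2 _) (hz2 _) (he2 _) (hz2 _) (he2 _)]
    rw [aux_cov_comm (z (g i)) (e l'), aux_cov_comm (z (g j)) (e l')]
    rw [hez, hez, hez, hez, hee i l' (Ne.symm h1), hee j l' (Ne.symm h2)]
    ring
  have hfirst : cov μ (fun ω => u i ω - u j ω) (u l)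
      = cov μ (z (g i)) (z (g i)) - cov μ (z (g j)) (z (g i)) := by
    rw [key l hl₁ hl₂, hl₃]
  refine ⟨hfirst, ?_⟩
  set d1 := cov μ (z (g i)) (z (g i)) - cov μ (z (g j)) (z (g i)) with hd1
  set d2 := cov μ (z (g j)) (z (g j)) - cov μ (z (g i)) (z (g j)) with hd2
  have hpos : 0 < d1 + d2 := by
    obtain ⟨v, hv⟩ : ∃ v : Fin K → ℝ, v = Pi.single (g i) 1 - Pi.single (g j) 1 := ⟨_, rfl⟩
    have hvne : v ≠ 0 := by
      intro h
      have := congrFun h (g i)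
      simp [hv, Pi.single_apply, hij, Ne.symm hij] at this
    have hq : dotProduct v ((Matrix.of (fun k k' : Fin K => cov μ (z k) (z k'))).mulVec v)
        = d1 + d2 := by
      rw [hv, Matrix.mulVec_sub, Matrix.mulVec_single, Matrix.mulVec_single]
      simp only [sub_dotProduct, single_dotProduct, Pi.sub_apply, mul_one,
        one_mul, Matrix.of_apply, MulOpposite.op_one, one_smul, Matrix.col_apply]
      rw [hd1, hd2, aux_cov_comm (z (g j)) (z (g i))]
      ring
    have hpd := hSz.dotProduct_mulVec_pos hvne
    rw [show (star v) = v from rfl, hq] at hpd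
    exact hpd
  rcases eq_or_ne d1 0 with h0 | h0
  · have hd2ne : d2 ≠ 0 := by intro h; rw [h0, h] at hpos; simp at hpos
    obtain ⟨l'', hl''j, hl''g⟩ : ∃ l'', l'' ≠ j ∧ g l'' = g j := by
      have hc := hgsize (g j)
      obtain ⟨x, hx, hxj⟩ := Finset.exists_mem_ne (s := Finset.univ.filter (fun i => g i = g j)) (by omega) j
      exact ⟨x, hxj, (Finset.mem_filter.mp hx).2⟩
    have hl''i : l'' ≠ i := fun h => hij (h ▸ hl''g)
    have hmem : l'' ∈ Finset.univ.filter (fun l' : Fin p => l' ≠ i ∧ l' ≠ j) := by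
      simp [hl''i, hl''j]
    calc (0:ℝ) < |cov μ (fun ω => u i ω - u j ω) (u l'')| := by
          rw [key l'' hl''i hl''j, hl''g, abs_pos]
          intro h
          exact hd2ne (by rw [hd2]; linarith)
      _ ≤ _ := Finset.le_sup' (fun l' => |cov μ (fun ω => u i ω - u j ω) (u l')|) hmem
  · have hmem : l ∈ Finset.univ.filter (fun l' : Fin p => l' ≠ i ∧ l' ≠ j) := by
      simp [hl₁, hl₂]
    calc (0:ℝ) < |cov μ (fun ω => u i ω - u j ω) (u l)| := by
          rw [hfirst, abs_pos]; exact h0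
      _ ≤ _ := Finset.le_sup' (fun l' => |cov μ (fun ω => u i ω - u j ω) (u l')|) hmem
end

section
/- Let v_1,…,v_d be square-integrable random variables with Var(v_i) = 1 for all i, and let v̂_1,…,v̂_d be another collection of square-integrable random variables. Write s_{ij} = Cov(v_i, v_j), ŝ_{ij} = Cov(v̂_i, v̂_j), r_{ij} = Cor(v_i, v_j) = s_{ij}, and r̂_{ij} = ŝ_{ij}/√(ŝ_{ii} ŝ_{jj}) (assuming ŝ_{ii} > 0 for all i). Then max_{i,j} |r̂_{ij} - r_{ij}| ≤ 2 max_{i,j} |ŝ_{ij} - s_{ij}|. -/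
open MeasureTheory

lemma memLp_integrable_mul {Ω : Type*} [MeasurableSpace Ω] {μ : Measure Ω}
    {f g : Ω → ℝ} (hf : MemLp f 2 μ) (hg : MemLp g 2 μ) :
    Integrable (fun ω => f ω * g ω) μ := by
  have h : (fun ω => f ω * g ω)
      = fun ω => ((f ω + g ω) ^ 2 - f ω ^ 2 - g ω ^ 2) / 2 := by
    funext ω; ring
  rw [h]
  exact (((hf.add hg).integrable_sq.sub hf.integrable_sq).sub hg.integrable_sq).div_const 2

lemma integral_mul_sq_le {Ω : Type*} [MeasurableSpace Ω] {μ : Measure Ω}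
    {f g : Ω → ℝ} (hf : MemLp f 2 μ) (hg : MemLp g 2 μ) :
    (∫ ω, f ω * g ω ∂μ) ^ 2 ≤ (∫ ω, f ω ^ 2 ∂μ) * (∫ ω, g ω ^ 2 ∂μ) := by
  set F := hf.toLp f
  set G := hg.toLp g
  have hFG : (inner ℝ F G : ℝ) = ∫ ω, f ω * g ω ∂μ := by
    rw [MeasureTheory.L2.inner_def]
    apply integral_congr_ae
    filter_upwards [hf.coeFn_toLp, hg.coeFn_toLp] with ω h1 h2
    simp [RCLike.inner_apply, F, G, h1, h2, mul_comm]
  have hFF : (inner ℝ F F : ℝ) = ∫ ω, f ω ^ 2 ∂μ := by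
    rw [MeasureTheory.L2.inner_def]
    apply integral_congr_ae
    filter_upwards [hf.coeFn_toLp] with ω h1
    simp [RCLike.inner_apply, F, h1, sq]
  have hGG : (inner ℝ G G : ℝ) = ∫ ω, g ω ^ 2 ∂μ := by
    rw [MeasureTheory.L2.inner_def]
    apply integral_congr_ae
    filter_upwards [hg.coeFn_toLp] with ω h2
    simp [RCLike.inner_apply, G, h2, sq]
  have h := abs_real_inner_le_norm F G
  have hF : (inner ℝ F F : ℝ) = ‖F‖ ^ 2 := real_inner_self_eq_norm_sq F
  have hG : (inner ℝ G G : ℝ) = ‖G‖ ^ 2 := real_inner_self_eq_norm_sq G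
  rw [← hFG, ← hFF, ← hGG, hF, hG]
  calc (inner ℝ F G : ℝ) ^ 2 = |(inner ℝ F G : ℝ)| ^ 2 := (sq_abs _).symm
    _ ≤ (‖F‖ * ‖G‖) ^ 2 := pow_le_pow_left₀ (abs_nonneg _) h 2
    _ = ‖F‖ ^ 2 * ‖G‖ ^ 2 := by ring

lemma cov_eq_integral_centered {Ω : Type*} [MeasurableSpace Ω] {μ : Measure Ω}
    [IsProbabilityMeasure μ] {X Y : Ω → ℝ} (hX : MemLp X 2 μ) (hY : MemLp Y 2 μ) :
    cov μ X Y = ∫ ω, (X ω - ∫ ω', X ω' ∂μ) * (Y ω - ∫ ω', Y ω' ∂μ) ∂μ := by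
  set a := ∫ ω', X ω' ∂μ
  set b := ∫ ω', Y ω' ∂μ
  have hXi : Integrable X μ := hX.integrable one_le_two
  have hYi : Integrable Y μ := hY.integrable one_le_two
  have hmul : Integrable (fun ω => X ω * Y ω) μ := memLp_integrable_mul hX hY
  have h : (fun ω => (X ω - a) * (Y ω - b))
      = fun ω => (X ω * Y ω - b * X ω) - (a * Y ω - a * b) := by
    funext ω; ring
  have hI1 : Integrable (fun ω => X ω * Y ω - b * X ω) μ := hmul.sub (hXi.const_mul b)
  have hI2 : Integrable (fun ω => a * Y ω - a * b) μ :=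
    (hYi.const_mul a).sub (integrable_const _)
  have hI3 : Integrable (fun ω => b * X ω) μ := hXi.const_mul b
  have hI4 : Integrable (fun ω => a * Y ω) μ := hYi.const_mul a
  rw [cov, h, integral_sub hI1 hI2, integral_sub hmul hI3,
    integral_sub hI4 (integrable_const _),
    integral_const_mul, integral_const_mul, integral_const]
  simp [a, b]
  ring

lemma cov_sq_le {Ω : Type*} [MeasurableSpace Ω] {μ : Measure Ω}
    [IsProbabilityMeasure μ] {X Y : Ω → ℝ} (hX : MemLp X 2 μ) (hY : MemLp Y 2 μ) :
    (cov μ X Y) ^ 2 ≤ cov μ X X * cov μ Y Y := by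
  have hX' : MemLp (fun ω => X ω - ∫ ω', X ω' ∂μ) 2 μ := hX.sub (memLp_const _)
  have hY' : MemLp (fun ω => Y ω - ∫ ω', Y ω' ∂μ) 2 μ := hY.sub (memLp_const _)
  have h := integral_mul_sq_le hX' hY'
  rw [cov_eq_integral_centered hX hY, cov_eq_integral_centered hX hX,
    cov_eq_integral_centered hY hY]
  calc (∫ ω, (X ω - ∫ ω', X ω' ∂μ) * (Y ω - ∫ ω', Y ω' ∂μ) ∂μ) ^ 2
      ≤ (∫ ω, (X ω - ∫ ω', X ω' ∂μ) ^ 2 ∂μ) * (∫ ω, (Y ω - ∫ ω', Y ω' ∂μ) ^ 2 ∂μ) := h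
    _ = (∫ ω, (X ω - ∫ ω', X ω' ∂μ) * (X ω - ∫ ω', X ω' ∂μ) ∂μ) *
        (∫ ω, (Y ω - ∫ ω', Y ω' ∂μ) * (Y ω - ∫ ω', Y ω' ∂μ) ∂μ) := by
        simp [sq]

lemma key_real_ineq (a b s t ε : ℝ) (ha : 0 < a) (hb : 0 < b) (hcs : t ^ 2 ≤ a * b)
    (h1 : |t - s| ≤ ε) (h2 : |a - 1| ≤ ε) (h3 : |b - 1| ≤ ε) :
    |t / Real.sqrt (a * b) - s| ≤ 2 * ε := by
  have hε : 0 ≤ ε := (abs_nonneg _).trans h2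
  set d := Real.sqrt (a * b) with hdd
  have hd : 0 < d := Real.sqrt_pos.mpr (by positivity)
  have hd2 : d ^ 2 = a * b := Real.sq_sqrt (by positivity)
  have htd : |t| ≤ d := by
    rw [hdd, ← Real.sqrt_sq_eq_abs]
    exact Real.sqrt_le_sqrt hcs
  have h2' : |1 - d| ≤ ε := by
    rw [abs_le] at h2 h3 ⊢
    constructor
    · nlinarith [sq_nonneg (d - (1 + ε))]
    · rcases le_or_gt (1 - ε) 0 with h | h
      · nlinarith
      · nlinarith [sq_nonneg (d - (1 - ε))]
  have hr : |t / d| ≤ 1 := by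
    rw [abs_div, abs_of_pos hd, div_le_one hd]
    exact htd
  have heq : t / d - s = (t / d) * (1 - d) + (t - s) := by
    field_simp
    ring
  rw [heq]
  calc |(t / d) * (1 - d) + (t - s)| ≤ |(t / d) * (1 - d)| + |t - s| := abs_add_le _ _
    _ = |t / d| * |1 - d| + |t - s| := by rw [abs_mul]
    _ ≤ 1 * ε + ε :=
        add_le_add (mul_le_mul hr h2' (abs_nonneg _) one_pos.le) h1
    _ = 2 * ε := by ring

/-- If `Var(v_i) = 1` for all `i`, `ŝ_{ij} = Cov(v̂_i, v̂_j)` with `ŝ_{ii} > 0`,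
`s_{ij} = Cov(v_i, v_j) = r_{ij}` and `r̂_{ij} = ŝ_{ij}/√(ŝ_{ii} ŝ_{jj})`, then
`max_{i,j} |r̂_{ij} - r_{ij}| ≤ 2 max_{i,j} |ŝ_{ij} - s_{ij}|`. -/
theorem max_cor_diff_le_two_max_cov_diff
    {Ω : Type*} [MeasurableSpace Ω] (μ : Measure Ω) [IsProbabilityMeasure μ]
    {d : ℕ} [NeZero d] (v vhat : Fin d → Ω → ℝ)
    (hv2 : ∀ i, MemLp (v i) 2 μ) (hvhat2 : ∀ i, MemLp (vhat i) 2 μ)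
    (hvar : ∀ i, cov μ (v i) (v i) = 1)
    (hvarhat : ∀ i, 0 < cov μ (vhat i) (vhat i)) :
    (Finset.univ.sup' Finset.univ_nonempty
        (fun q : Fin d × Fin d =>
          |cov μ (vhat q.1) (vhat q.2) /
              Real.sqrt (cov μ (vhat q.1) (vhat q.1) * cov μ (vhat q.2) (vhat q.2)) -
            cov μ (v q.1) (v q.2)|)) ≤
      2 * Finset.univ.sup' Finset.univ_nonempty
        (fun q : Fin d × Fin d => |cov μ (vhat q.1) (vhat q.2) - cov μ (v q.1) (v q.2)|) := by
  set ε := Finset.univ.sup' Finset.univ_nonempty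
      (fun q : Fin d × Fin d => |cov μ (vhat q.1) (vhat q.2) - cov μ (v q.1) (v q.2)|) with hε
  apply Finset.sup'_le
  rintro ⟨i, j⟩ -
  have e1 : |cov μ (vhat i) (vhat j) - cov μ (v i) (v j)| ≤ ε :=
    Finset.le_sup' (f := fun q : Fin d × Fin d =>
      |cov μ (vhat q.1) (vhat q.2) - cov μ (v q.1) (v q.2)|) (Finset.mem_univ (i, j))
  have e2 : |cov μ (vhat i) (vhat i) - 1| ≤ ε := by
    have := Finset.le_sup' (f := fun q : Fin d × Fin d =>
      |cov μ (vhat q.1) (vhat q.2) - cov μ (v q.1) (v q.2)|) (Finset.mem_univ (i, i))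
    rwa [hvar i] at this
  have e3 : |cov μ (vhat j) (vhat j) - 1| ≤ ε := by
    have := Finset.le_sup' (f := fun q : Fin d × Fin d =>
      |cov μ (vhat q.1) (vhat q.2) - cov μ (v q.1) (v q.2)|) (Finset.mem_univ (j, j))
    rwa [hvar j] at this
  exact key_real_ineq _ _ _ _ _ (hvarhat i) (hvarhat j)
    (cov_sq_le (hvhat2 i) (hvhat2 j)) e1 e2 e3
end

section
/- Let Σ and Σ_u be n×n positive definite matrices such that Σ - Σ_u is positive semidefinite (equivalently, Σ_u⁻¹ - Σ⁻¹ is positive semidefinite). Then for any symmetric n×n matrix D, ‖Σ^{-1/2} D Σ^{-1/2}‖_F ≤ ‖Σ_u^{-1/2} D Σ_u^{-1/2}‖_F, i.e., ‖D‖_Σ ≤ ‖D‖_{Σ_u} in the weighted quadratic norm ‖D‖_A = n^{-1/2}‖A^{-1/2} D A^{-1/2}‖_F. -/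
open Matrix

/-- The Frobenius norm of a real matrix. -/
noncomputable def frobNorm {n : ℕ} (M : Matrix (Fin n) (Fin n) ℝ) : ℝ :=
  Real.sqrt (∑ i, ∑ j, (M i j) ^ 2)

/-- The positive semidefinite square root of a positive semidefinite matrix
(the definition `Matrix.PosSemidef.sqrt` of the older Mathlib, since removed). -/
noncomputable def Matrix.PosSemidef.sqrt {n : Type*} [Fintype n] [DecidableEq n]
    {A : Matrix n n ℝ} (hA : A.PosSemidef) : Matrix n n ℝ :=
  hA.1.eigenvectorUnitary.1 * diagonal ((↑) ∘ (√·) ∘ hA.1.eigenvalues) *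
  (star hA.1.eigenvectorUnitary : Matrix n n ℝ)

namespace WNMaux

variable {n : ℕ}

lemma sqrt_isHermitian {A : Matrix (Fin n) (Fin n) ℝ} (hA : A.PosSemidef) :
    hA.sqrt.IsHermitian := by
  unfold Matrix.PosSemidef.sqrt
  simp [Matrix.IsHermitian, Matrix.mul_assoc, Matrix.star_eq_conjTranspose]

lemma sqrt_mul_self {A : Matrix (Fin n) (Fin n) ℝ} (hA : A.PosSemidef) :
    hA.sqrt * hA.sqrt = A := by
  unfold Matrix.PosSemidef.sqrt
  set U := hA.1.eigenvectorUnitary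
  have hU : (star U : Matrix (Fin n) (Fin n) ℝ) * U = 1 := Unitary.coe_star_mul_self U
  calc U.1 * diagonal ((↑) ∘ (√·) ∘ hA.1.eigenvalues) * (star U : Matrix (Fin n) (Fin n) ℝ) *
        (U.1 * diagonal ((↑) ∘ (√·) ∘ hA.1.eigenvalues) * (star U : Matrix (Fin n) (Fin n) ℝ))
      = U.1 * (diagonal ((↑) ∘ (√·) ∘ hA.1.eigenvalues) * diagonal ((↑) ∘ (√·) ∘ hA.1.eigenvalues))
          * (star U : Matrix (Fin n) (Fin n) ℝ) := by
        simp only [Matrix.mul_assoc]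
        rw [← Matrix.mul_assoc (star U : Matrix (Fin n) (Fin n) ℝ) U.1, hU, Matrix.one_mul]
    _ = A := by
        rw [diagonal_mul_diagonal]
        conv_rhs => rw [hA.1.spectral_theorem, Unitary.conjStarAlgAut_apply]
        congr 3
        funext i
        exact Real.mul_self_sqrt (hA.eigenvalues_nonneg i)

lemma trace_psd_nonneg {M : Matrix (Fin n) (Fin n) ℝ} (hM : M.PosSemidef) :
    0 ≤ M.trace := by
  rw [Matrix.trace]
  refine Finset.sum_nonneg fun i _ => ?_
  exact hM.diag_nonneg

lemma trace_mul_nonneg {M N : Matrix (Fin n) (Fin n) ℝ}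
    (hM : M.PosSemidef) (hN : N.PosSemidef) : 0 ≤ (M * N).trace := by
  obtain ⟨B, rfl⟩ : ∃ B : Matrix (Fin n) (Fin n) ℝ, N = Bᴴ * B :=
    ⟨hN.sqrt, by rw [(sqrt_isHermitian hN).eq, sqrt_mul_self hN]⟩
  have h : (M * (Bᴴ * B)).trace = (B * M * Bᴴ).trace := by
    rw [← Matrix.mul_assoc, Matrix.trace_mul_comm, Matrix.mul_assoc]
  rw [h]
  exact trace_psd_nonneg (hM.mul_mul_conjTranspose_same B)

lemma inv_sub_inv_psd {S Su : Matrix (Fin n) (Fin n) ℝ} (hS : S.PosDef) (hSu : Su.PosDef)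
    (hdiff : (S - Su).PosSemidef) : (Su⁻¹ - S⁻¹).PosSemidef := by
  set Δ := S - Su with hΔ
  have hSd : IsUnit S.det := hS.det_pos.ne'.isUnit
  have hSud : IsUnit Su.det := hSu.det_pos.ne'.isUnit
  have h1 : S⁻¹ * S = 1 := Matrix.nonsing_inv_mul _ hSd
  have h2 : Su * Su⁻¹ = 1 := Matrix.mul_nonsing_inv _ hSud
  have h3 : Su⁻¹ * Su = 1 := Matrix.nonsing_inv_mul _ hSud
  have h4 : S * S⁻¹ = 1 := Matrix.mul_nonsing_inv _ hSd
  have key1 : Su⁻¹ - S⁻¹ = S⁻¹ * Δ * Su⁻¹ := by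
    calc Su⁻¹ - S⁻¹ = S⁻¹ * S * Su⁻¹ - S⁻¹ * (Su * Su⁻¹) := by
          rw [h1, h2, Matrix.one_mul, Matrix.mul_one]
    _ = S⁻¹ * Δ * Su⁻¹ := by rw [hΔ]; noncomm_ring
  have key2 : Su⁻¹ - S⁻¹ = Su⁻¹ * Δ * S⁻¹ := by
    calc Su⁻¹ - S⁻¹ = Su⁻¹ * (S * S⁻¹) - Su⁻¹ * Su * S⁻¹ := by
          rw [h3, h4, Matrix.one_mul, Matrix.mul_one]
    _ = Su⁻¹ * Δ * S⁻¹ := by rw [hΔ]; noncomm_ring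
  have hsub : Su⁻¹ = S⁻¹ + Su⁻¹ * Δ * S⁻¹ := by rw [← key2]; abel
  have key3 : Su⁻¹ - S⁻¹ = S⁻¹ * Δ * S⁻¹ + S⁻¹ * Δ * (Su⁻¹ * Δ * S⁻¹) := by
    calc Su⁻¹ - S⁻¹ = S⁻¹ * Δ * Su⁻¹ := key1
    _ = S⁻¹ * Δ * (S⁻¹ + Su⁻¹ * Δ * S⁻¹) := by rw [← hsub]
    _ = _ := by rw [Matrix.mul_add]
  rw [key3]
  have hSinvT : (S⁻¹)ᴴ = S⁻¹ := (hS.posSemidef.inv).isHermitian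
  have hΔT : Δᴴ = Δ := hdiff.isHermitian
  have t1 : (S⁻¹ * Δ * S⁻¹).PosSemidef := by
    have := hdiff.mul_mul_conjTranspose_same (S⁻¹)
    rwa [hSinvT] at this
  have t2 : (S⁻¹ * Δ * (Su⁻¹ * Δ * S⁻¹)).PosSemidef := by
    have := (hSu.posSemidef.inv).mul_mul_conjTranspose_same (S⁻¹ * Δ)
    rw [Matrix.conjTranspose_mul, hSinvT, hΔT] at this
    simpa only [Matrix.mul_assoc] using this
  exact t1.add t2

lemma trace_quad_mono {X Y D : Matrix (Fin n) (Fin n) ℝ} (hX : X.PosSemidef) (hY : Y.PosSemidef)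
    (hXY : (Y - X).PosSemidef) (hD : Dᵀ = D) :
    (D * X * D * X).trace ≤ (D * Y * D * Y).trace := by
  have hDH : Dᴴ = D := by rwa [Matrix.conjTranspose_eq_transpose_of_trivial]
  have hM1 : (D * X * D).PosSemidef := by
    have := hX.mul_mul_conjTranspose_same D; rwa [hDH] at this
  have hM2 : (D * Y * D).PosSemidef := by
    have := hY.mul_mul_conjTranspose_same D; rwa [hDH] at this
  have step1 : (D * X * D * X).trace ≤ (D * X * D * Y).trace := by
    have h := trace_mul_nonneg hM1 hXY
    rw [Matrix.mul_sub, Matrix.trace_sub] at h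
    linarith
  have eq1 : (D * X * D * Y).trace = (D * Y * D * X).trace := by
    rw [show D * X * D * Y = (D * X) * (D * Y) by rw [Matrix.mul_assoc],
      Matrix.trace_mul_comm, ← Matrix.mul_assoc]
  have step2 : (D * Y * D * X).trace ≤ (D * Y * D * Y).trace := by
    have h := trace_mul_nonneg hM2 hXY
    rw [Matrix.mul_sub, Matrix.trace_sub] at h
    linarith
  linarith

lemma frob_sq_eq_trace {M : Matrix (Fin n) (Fin n) ℝ} (hM : Mᵀ = M) :
    (∑ i, ∑ j, (M i j) ^ 2) = (M * M).trace := by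
  have hM' : ∀ i j, M j i = M i j := fun i j => congrFun (congrFun hM i) j
  simp only [Matrix.trace, Matrix.diag, Matrix.mul_apply, pow_two]
  refine Finset.sum_congr rfl fun i _ => Finset.sum_congr rfl fun j _ => ?_
  rw [hM' j i]

/-- For `A` posdef with square root `B = sqrt A`, `R := B⁻¹` is symmetric, `R * R = A⁻¹`,
and `trace ((R*D*R)*(R*D*R)) = trace (D * A⁻¹ * D * A⁻¹)`. -/
lemma trace_conj_sqrt_inv {A : Matrix (Fin n) (Fin n) ℝ} (hA : A.PosDef)
    (D : Matrix (Fin n) (Fin n) ℝ) (hD : Dᵀ = D) :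
    let R := (hA.posSemidef.sqrt)⁻¹
    ((R * D * R)ᵀ = R * D * R) ∧
      ((R * D * R) * (R * D * R)).trace = (D * A⁻¹ * D * A⁻¹).trace := by
  intro R
  have hB : (hA.posSemidef.sqrt)ᵀ = hA.posSemidef.sqrt := by
    have := sqrt_isHermitian hA.posSemidef
    rwa [Matrix.IsHermitian, Matrix.conjTranspose_eq_transpose_of_trivial] at this
  have hRT : Rᵀ = R := by
    rw [show R = (hA.posSemidef.sqrt)⁻¹ from rfl, Matrix.transpose_nonsing_inv, hB]
  have hRR : R * R = A⁻¹ := by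
    rw [show R = (hA.posSemidef.sqrt)⁻¹ from rfl, ← Matrix.mul_inv_rev,
      sqrt_mul_self hA.posSemidef]
  constructor
  · rw [Matrix.transpose_mul, Matrix.transpose_mul, hRT, hD, Matrix.mul_assoc]
  · have e1 : (R * D * R) * (R * D * R) = R * (D * (R * R) * D * R) := by
      simp only [Matrix.mul_assoc]
    rw [e1, Matrix.trace_mul_comm]
    have e2 : D * (R * R) * D * R * R = D * (R * R) * D * (R * R) := by
      simp only [Matrix.mul_assoc]
    rw [e2, hRR]

end WNMaux

/-- If `Σ` and `Σ_u` are positive definite with `Σ - Σ_u` positive semidefinite,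
then for any symmetric `D`, `‖Σ^{-1/2} D Σ^{-1/2}‖_F ≤ ‖Σ_u^{-1/2} D Σ_u^{-1/2}‖_F`. -/
theorem weighted_norm_mono {n : ℕ}
    (S Su : Matrix (Fin n) (Fin n) ℝ) (hS : S.PosDef) (hSu : Su.PosDef)
    (hdiff : (S - Su).PosSemidef)
    (D : Matrix (Fin n) (Fin n) ℝ) (hD : Dᵀ = D) :
    frobNorm ((hS.posSemidef.sqrt)⁻¹ * D * (hS.posSemidef.sqrt)⁻¹) ≤
      frobNorm ((hSu.posSemidef.sqrt)⁻¹ * D * (hSu.posSemidef.sqrt)⁻¹) := by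
  obtain ⟨hsym1, htr1⟩ := WNMaux.trace_conj_sqrt_inv hS D hD
  obtain ⟨hsym2, htr2⟩ := WNMaux.trace_conj_sqrt_inv hSu D hD
  rw [frobNorm, frobNorm, WNMaux.frob_sq_eq_trace hsym1, WNMaux.frob_sq_eq_trace hsym2]
  apply Real.sqrt_le_sqrt
  rw [htr1, htr2]
  exact WNMaux.trace_quad_mono hS.posSemidef.inv hSu.posSemidef.inv
    (WNMaux.inv_sub_inv_psd hS hSu hdiff) hD
end
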